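/- Let ℓ be a prime, n ≥ 1, and 𝐝 = (d₁,…,dₙ) ∈ ℕⁿ with all dᵢ ≥ 1. If ℓ ≤ 1 + min{dᵢ : 1 ≤ i ≤ n}, then δₙ(ℓ,𝐝) = 1 − (1 − (1 − 1/ℓ)ⁿ)^ℓ. Equivalently, the number of n-tuples (P₁,…,Pₙ) of polynomials in 𝔽_ℓ[t] with deg Pᵢ ≤ dᵢ such that P₁⋯Pₙ does not vanish identically on 𝔽_ℓ equals ℓ^{n+d₁+⋯+dₙ} · (1 − (1 − (1 − 1/ℓ)ⁿ)^ℓ). -/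

import Mathlib

open Polynomial Finset

-- fiber-counting lemma
lemma aux_card_filter_preimage {A B : Type*} [Fintype A] [Fintype B] [DecidableEq B]
    (f : A → B) (k : ℕ) (hk : ∀ b : B, (Finset.univ.filter (fun a => f a = b)).card = k)
    (S : Finset B) :
    (Finset.univ.filter (fun a => f a ∈ S)).card = k * S.card := by
  classical
  rw [Finset.card_eq_sum_card_fiberwise (f := f) (s := Finset.univ.filter (fun a => f a ∈ S)) (t := S)
    (fun a ha => (Finset.mem_filter.mp (Finset.mem_coe.mp ha)).2)]
  rw [Finset.sum_congr rfl (fun b hb => ?_), Finset.sum_const, smul_eq_mul, mul_comm]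
  rw [Finset.filter_filter, ← hk b]
  congr 1
  ext a
  simp only [Finset.mem_filter, Finset.mem_univ, true_and]
  exact ⟨fun h => h.2, fun h => ⟨h ▸ hb, h⟩⟩

lemma aux_fiber_const {A B : Type*} [AddCommGroup A] [AddCommGroup B] [Fintype A]
    (f : A →+ B) (hf : Function.Surjective f) (b : B) :
    Nat.card {a : A // f a = b} = Nat.card {a : A // f a = 0} := by
  obtain ⟨a₀, ha₀⟩ := hf b
  refine Nat.card_congr ⟨fun a => ⟨a.1 - a₀, by simp [a.2, ha₀]⟩,
    fun a => ⟨a.1 + a₀, by simp [a.2, ha₀]⟩, fun a => ?_, fun a => ?_⟩ <;>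
    · apply Subtype.ext; simp

variable {F : Type*} [Field F] [Fintype F] [DecidableEq F]

/-- evaluation as an additive hom on `degreeLT`. -/
noncomputable def auxEv (m : ℕ) : degreeLT F m →+ (F → F) :=
  AddMonoidHom.mk' (fun p x => (p : F[X]).eval x) (by
    intro p q; funext x; simp)

lemma auxEv_surjective (m : ℕ) (hm : Fintype.card F ≤ m) :
    Function.Surjective (auxEv (F := F) m) := by
  intro g
  refine ⟨⟨Lagrange.interpolate Finset.univ id g, mem_degreeLT.2 ?_⟩, ?_⟩
  · refine lt_of_lt_of_le (Lagrange.degree_interpolate_lt _ (Function.injective_id.injOn)) ?_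
    rw [Finset.card_univ]
    exact_mod_cast hm
  · funext x
    exact Lagrange.eval_interpolate_at_node _ Function.injective_id.injOn (Finset.mem_univ x)

noncomputable instance (m : ℕ) : Fintype (degreeLT F m) :=
  Fintype.ofEquiv _ (degreeLTEquiv F m).toEquiv.symm

omit [DecidableEq F] in
lemma aux_card_degreeLT (m : ℕ) :
    Fintype.card (degreeLT F m) = Fintype.card F ^ m := by
  rw [Fintype.card_congr (degreeLTEquiv F m).toEquiv]
  simp

/-- every fiber of `auxEv` has the same cardinality `k`, and `k * q^q = q^m`. -/
lemma aux_ev_fibers (m : ℕ) (hm : Fintype.card F ≤ m) :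
    ∃ k : ℕ, k * Fintype.card F ^ Fintype.card F = Fintype.card F ^ m ∧
      ∀ g : F → F,
        (Finset.univ.filter (fun p : degreeLT F m => auxEv m p = g)).card = k := by
  classical
  set k : ℕ := Nat.card {p : degreeLT F m // auxEv m p = 0} with hkdef
  have hfib : ∀ g : F → F,
      (Finset.univ.filter (fun p : degreeLT F m => auxEv m p = g)).card = k := by
    intro g
    rw [← Fintype.card_subtype, ← Nat.card_eq_fintype_card]
    exact aux_fiber_const _ (auxEv_surjective m hm) g
  refine ⟨k, ?_, hfib⟩
  have := aux_card_filter_preimage (fun p : degreeLT F m => auxEv m p) k hfib Finset.univ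
  simp only [Finset.mem_univ, Finset.filter_true, Finset.card_univ] at this
  rw [aux_card_degreeLT] at this
  rw [this]
  congr 1
  simp [Fintype.card_fun]

lemma aux_card_vanish (n : ℕ) :
    Fintype.card {v : Fin n → F // ∏ i, v i = 0} + (Fintype.card F - 1) ^ n
      = Fintype.card F ^ n := by
  classical
  have h1 : Fintype.card {v : Fin n → F // ¬ ∏ i, v i = 0}
      = (Fintype.card F - 1) ^ n := by
    have e : {v : Fin n → F // ¬ ∏ i, v i = 0} ≃ ∀ _ : Fin n, {a : F // a ≠ 0} := by
      refine (Equiv.subtypeEquivRight ?_).trans (Equiv.subtypePiEquivPi)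
      intro v
      simp [Finset.prod_eq_zero_iff]
    rw [Fintype.card_congr e, Fintype.card_pi]
    have : Fintype.card {a : F // a ≠ 0} = Fintype.card F - 1 := by
      rw [Fintype.card_subtype_compl, Fintype.card_subtype_eq]
    simp [this]
  have h2 : Fintype.card {v : Fin n → F // ¬ ∏ i, v i = 0}
      = Fintype.card F ^ n - Fintype.card {v : Fin n → F // ∏ i, v i = 0} := by
    rw [Fintype.card_subtype_compl]
    congr 1
    simp [Fintype.card_fun]
  have hle : Fintype.card {v : Fin n → F // ∏ i, v i = 0} ≤ Fintype.card F ^ n := by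
    have := Fintype.card_subtype_le (fun v : Fin n → F => ∏ i, v i = 0)
    simpa [Fintype.card_fun] using this
  rw [← h1, h2, Nat.add_sub_cancel' hle]

lemma aux_card_good_fun (n : ℕ) :
    (Finset.univ.filter (fun g : Fin n → (F → F) => ∃ x, ∏ i, g i x ≠ 0)).card
      + (Fintype.card {v : Fin n → F // ∏ i, v i = 0}) ^ (Fintype.card F)
      = (Fintype.card F ^ Fintype.card F) ^ n := by
  classical
  have hbad : (Finset.univ.filter
        (fun g : Fin n → (F → F) => ¬ ∃ x, ∏ i, g i x ≠ 0)).card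
      = (Fintype.card {v : Fin n → F // ∏ i, v i = 0}) ^ (Fintype.card F) := by
    rw [← Fintype.card_subtype]
    have e : {g : Fin n → (F → F) // ¬ ∃ x, ∏ i, g i x ≠ 0}
        ≃ ∀ _ : F, {v : Fin n → F // ∏ i, v i = 0} := by
      refine (Equiv.subtypeEquivRight (fun g => by push_neg; rfl)).trans ?_
      exact { toFun := fun g x => ⟨fun i => g.1 i x, g.2 x⟩
              invFun := fun h => ⟨fun i x => (h x).1 i, fun x => (h x).2⟩
              left_inv := fun g => rfl
              right_inv := fun h => rfl }
    rw [Fintype.card_congr e, Fintype.card_pi]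
    simp
  have h3 := Finset.card_filter_add_card_filter_not
    (s := (Finset.univ : Finset (Fin n → (F → F))))
    (p := fun g => ∃ x, ∏ i, g i x ≠ 0)
  rw [hbad, Finset.card_univ, Fintype.card_fun, Fintype.card_fun, Fintype.card_fin] at h3
  exact h3

@[simp] lemma auxEv_apply (m : ℕ) (p : degreeLT F m) (x : F) :
    auxEv m p x = (p : F[X]).eval x := rfl

lemma aux_pi_fiber {n : ℕ} {A B : Fin n → Type*} [∀ i, Fintype (A i)]
    [∀ i, DecidableEq (B i)]
    (f : ∀ i, A i → B i) (k : Fin n → ℕ)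
    (hf : ∀ i b, (Finset.univ.filter (fun a => f i a = b)).card = k i)
    (g : ∀ i, B i) :
    (Finset.univ.filter (fun v : ∀ i, A i => (fun i => f i (v i)) = g)).card
      = ∏ i, k i := by
  classical
  rw [← Fintype.card_subtype]
  have e : {v : ∀ i, A i // (fun i => f i (v i)) = g} ≃ ∀ i, {a : A i // f i a = g i} :=
    (Equiv.subtypeEquivRight (fun v => funext_iff)).trans
      (Equiv.subtypePiEquivPi (p := fun i b => f i b = g i))
  rw [Fintype.card_congr e, Fintype.card_pi]
  exact Finset.prod_congr rfl fun i _ => by rw [Fintype.card_subtype, hf]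

/-- **Density of Schinzel `n`-tuples mod `ℓ` for small `ℓ`.**
If `ℓ ≤ 1 + min dᵢ`, then the number of `n`-tuples of polynomials over `𝔽_ℓ`
with `deg Pᵢ ≤ dᵢ` whose product does not vanish identically on `𝔽_ℓ` equals
`ℓ^{n + Σ dᵢ}·(1 − (1 − (1 − 1/ℓ)ⁿ)^ℓ)`. -/
theorem schinzel_density_small_prime
    (ℓ : ℕ) (hℓ : ℓ.Prime) (n : ℕ) (hn : 1 ≤ n)
    (d : Fin n → ℕ) (hd : ∀ i, 1 ≤ d i) (hsmall : ∀ i, ℓ ≤ 1 + d i) :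
    (Nat.card {P : Fin n → Polynomial (ZMod ℓ) //
        (∀ i, (P i).natDegree ≤ d i) ∧ ∃ x : ZMod ℓ, (∏ i, P i).eval x ≠ 0} : ℝ)
      = (ℓ : ℝ) ^ (n + ∑ i, d i) *
        (1 - (1 - (1 - 1 / (ℓ : ℝ)) ^ n) ^ ℓ) := by
  classical
  haveI : Fact ℓ.Prime := ⟨hℓ⟩
  haveI : NeZero ℓ := ⟨hℓ.ne_zero⟩
  set F := ZMod ℓ with hF
  have hq : Fintype.card F = ℓ := ZMod.card ℓ
  -- the evaluation maps and their fiber cardinalities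
  have hm : ∀ i, Fintype.card F ≤ d i + 1 := by
    intro i; rw [hq]; have := hsmall i; omega
  choose k hk1 hk2 using fun i => aux_ev_fibers (F := F) (d i + 1) (hm i)
  set f : ∀ i, degreeLT F (d i + 1) → (F → F) := fun i => auxEv (d i + 1) with hfdef
  set Φ : (∀ i, degreeLT F (d i + 1)) → (Fin n → (F → F)) :=
    fun v => fun i => f i (v i) with hΦ
  set S : Finset (Fin n → (F → F)) :=
    Finset.univ.filter (fun g => ∃ x, ∏ i, g i x ≠ 0) with hS
  -- main bijection
  have key : Nat.card {P : Fin n → Polynomial F //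
      (∀ i, (P i).natDegree ≤ d i) ∧ ∃ x : F, (∏ i, P i).eval x ≠ 0}
      = (Finset.univ.filter (fun v : ∀ i, degreeLT F (d i + 1) => Φ v ∈ S)).card := by
    rw [← Fintype.card_subtype, ← Nat.card_eq_fintype_card]
    refine Nat.card_congr ?_
    refine
      { toFun := fun P => ⟨fun i => ⟨P.1 i, ?_⟩, ?_⟩
        invFun := fun v => ⟨fun i => (v.1 i : F[X]), ?_, ?_⟩
        left_inv := fun P => rfl
        right_inv := fun v => rfl }
    · exact mem_degreeLT.2 (lt_of_le_of_lt (natDegree_le_iff_degree_le.mp (P.2.1 i))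
        (by exact_mod_cast lt_add_one (d i)))
    · simp only [hS, Finset.mem_filter, Finset.mem_univ, true_and, hΦ, hfdef, auxEv_apply]
      obtain ⟨x, hx⟩ := P.2.2
      exact ⟨x, by rw [eval_prod] at hx; simpa using hx⟩
    · intro i
      have h := mem_degreeLT.1 (v.1 i).2
      by_cases h0 : ((v.1 i : F[X])) = 0
      · simp [h0]
      · exact Nat.lt_succ_iff.mp ((natDegree_lt_iff_degree_lt h0).2 h)
    · have hv := v.2
      simp only [hS, Finset.mem_filter, Finset.mem_univ, true_and, hΦ, hfdef, auxEv_apply] at hv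
      obtain ⟨x, hx⟩ := hv
      exact ⟨x, by rw [eval_prod]; simpa using hx⟩
  have hfib : ∀ g : Fin n → (F → F),
      (Finset.univ.filter (fun v : ∀ i, degreeLT F (d i + 1) => Φ v = g)).card
        = ∏ i, k i := fun g => aux_pi_fiber f k (fun i b => hk2 i b) g
  have hcount : (Finset.univ.filter
        (fun v : ∀ i, degreeLT F (d i + 1) => Φ v ∈ S)).card = (∏ i, k i) * S.card :=
    aux_card_filter_preimage Φ (∏ i, k i) hfib S
  set Bv : ℕ := Fintype.card {v : Fin n → F // ∏ i, v i = 0} with hBvdef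
  have hBv : Bv + (ℓ - 1) ^ n = ℓ ^ n := by
    have h := aux_card_vanish (F := F) n; rw [hq] at h; exact h
  have hSc : S.card + Bv ^ ℓ = (ℓ ^ ℓ) ^ n := by
    have h := aux_card_good_fun (F := F) n; rw [hq] at h; exact h
  have hk1' : ∀ i, k i * ℓ ^ ℓ = ℓ ^ (d i + 1) := by
    intro i; have h := hk1 i; rw [hq] at h; exact h
  -- pass to the reals
  have ha : (ℓ:ℝ) ≠ 0 := Nat.cast_ne_zero.2 hℓ.ne_zero
  have hl1 : (1:ℕ) ≤ ℓ := hℓ.one_lt.le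
  have hBvr : (Bv:ℝ) = (ℓ:ℝ)^n - ((ℓ:ℝ)-1)^n := by
    have h := congrArg (Nat.cast : ℕ → ℝ) hBv
    push_cast [Nat.cast_sub hl1] at h
    linarith
  have hScr : (S.card:ℝ) = ((ℓ:ℝ)^ℓ)^n - ((ℓ:ℝ)^n - ((ℓ:ℝ)-1)^n)^ℓ := by
    rw [← hBvr]
    have h := congrArg (Nat.cast : ℕ → ℝ) hSc
    push_cast at h
    linarith
  have hKr : ((∏ i, k i : ℕ):ℝ) * ((ℓ:ℝ)^ℓ)^n = (ℓ:ℝ)^(n + ∑ i, d i) := by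
    have hnat : (∏ i, k i) * (ℓ^ℓ)^n = ℓ^(n + ∑ i, d i) := by
      calc (∏ i, k i) * (ℓ^ℓ)^n = ∏ i, (k i * ℓ^ℓ) := by
            rw [Finset.prod_mul_distrib, Finset.prod_const, Finset.card_univ,
              Fintype.card_fin]
        _ = ∏ i, ℓ^(d i + 1) := Finset.prod_congr rfl (fun i _ => hk1' i)
        _ = ℓ^(∑ i, (d i + 1)) := by rw [Finset.prod_pow_eq_pow_sum]
        _ = ℓ^(n + ∑ i, d i) := by
            congr 1
            rw [Finset.sum_add_distrib, Finset.sum_const, Finset.card_univ,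
              Fintype.card_fin, smul_eq_mul, mul_one, add_comm]
    exact_mod_cast congrArg (Nat.cast : ℕ → ℝ) hnat
  have h5 : (((ℓ:ℝ)^ℓ)^n) * (1 - (1 - 1/(ℓ:ℝ))^n)^ℓ
      = ((ℓ:ℝ)^n - ((ℓ:ℝ)-1)^n)^ℓ := by
    rw [pow_right_comm, ← mul_pow]
    congr 1
    rw [mul_sub, mul_one, ← mul_pow]
    congr 2
    field_simp
  rw [key, hcount, Nat.cast_mul, hScr, ← hKr, mul_sub, mul_sub, mul_one, mul_assoc, h5]
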